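/- Let (X, μ) be a nonatomic probability measure space and 𝒯 a tree on X (i.e., X ∈ 𝒯, each I ∈ 𝒯 has μ(I) > 0 and has a countable family C(I) of at least two pairwise disjoint elements of 𝒯 whose union is I, 𝒯 is the union of the generations 𝒯_(m), and sup_{I ∈ 𝒯_(m)} μ(I) → 0). Then for every I ∈ 𝒯 and every a ∈ (0,1) there exists a subfamily ℱ(I) ⊆ 𝒯 of pairwise disjoint subsets of I such that μ(⋃_{J ∈ ℱ(I)} J) = Σ_{J ∈ ℱ(I)} μ(J) = (1−a)μ(I). -/

import Mathlib

open MeasureTheory Set Filter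
open scoped ENNReal

/-- A tree `𝒯` on a probability space `(X, μ)` in the sense of Melas:
`X ∈ 𝒯`; every `I ∈ 𝒯` is measurable with `μ(I) > 0`; each `I ∈ 𝒯` has a finite or
countable family `C(I) ⊆ 𝒯` of at least two pairwise disjoint elements with union `I`;
`𝒯` is the union of its generations `𝒯_(m)`; and `sup_{I ∈ 𝒯_(m)} μ(I) → 0`. -/
structure DyadicTree {X : Type*} [MeasurableSpace X] (μ : Measure X) where
  mem : Set (Set X)
  univ_mem : Set.univ ∈ mem
  meas : ∀ I ∈ mem, MeasurableSet I
  measure_pos : ∀ I ∈ mem, 0 < μ I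
  C : Set X → Set (Set X)
  C_subset_mem : ∀ I ∈ mem, C I ⊆ mem
  C_countable : ∀ I ∈ mem, (C I).Countable
  C_nontrivial : ∀ I ∈ mem, ∃ J ∈ C I, ∃ K ∈ C I, J ≠ K
  C_disjoint : ∀ I ∈ mem, (C I).Pairwise Disjoint
  C_union : ∀ I ∈ mem, ⋃₀ C I = I
  gen : ℕ → Set (Set X)
  gen_zero : gen 0 = {Set.univ}
  gen_succ : ∀ m, gen (m + 1) = ⋃ I ∈ gen m, C I
  mem_eq : mem = ⋃ m, gen m
  sup_measure_tendsto : Tendsto (fun m => ⨆ I ∈ gen m, μ I) atTop (nhds 0)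

variable {X : Type*} [MeasurableSpace X]

/-- The average `Av_I(φ) = (1/μ(I)) ∫_I φ dμ`. -/
noncomputable def Av (μ : Measure X) (I : Set X) (φ : X → ℝ≥0∞) : ℝ≥0∞ :=
  (∫⁻ y in I, φ y ∂μ) / μ I

/-- The dyadic-like maximal operator
`M_𝒯 φ(x) = sup { (1/μ(I)) ∫_I φ dμ : x ∈ I ∈ 𝒯 }`. -/
noncomputable def maxOp {μ : Measure X} (T : DyadicTree μ) (φ : X → ℝ≥0∞) (x : X) : ℝ≥0∞ :=
  ⨆ I ∈ T.mem, ⨆ _ : x ∈ I, Av μ I φ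

section Aux

variable {μ : Measure X}

namespace DyadicTree

theorem subset_of_mem_C (T : DyadicTree μ) {I J : Set X} (hI : I ∈ T.mem) (hJ : J ∈ T.C I) :
    J ⊆ I := by
  conv_rhs => rw [← T.C_union I hI]
  exact Set.subset_sUnion_of_mem hJ

theorem step (T : DyadicTree μ) {J : Set X} (hJ : J ∈ T.mem)
    {r : ℝ≥0∞} (hr : r < μ J) :
    ∃ (S : Set (Set X)) (K : Set X), S ⊆ T.C J ∧ K ∈ T.C J ∧ (∀ A ∈ S, Disjoint A K) ∧
      (∑' A : S, μ (A : Set X)) ≤ r ∧ r < (∑' A : S, μ (A : Set X)) + μ K := by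
  classical
  obtain ⟨J₁, hJ₁, J₂, hJ₂, hne12⟩ := T.C_nontrivial J hJ
  obtain ⟨f, hf⟩ := (T.C_countable J hJ).exists_eq_range ⟨J₁, hJ₁⟩
  have hfC : ∀ n, f n ∈ T.C J := fun n => hf ▸ Set.mem_range_self n
  set f' : ℕ → Set X := fun n => if ∃ m < n, f m = f n then ∅ else f n with hf'
  have hf'cases : ∀ n, f' n = ∅ ∨ f' n = f n := fun n => by
    by_cases h : ∃ m < n, f m = f n <;> simp [hf', h]
  have hf'first : ∀ n, f' n ≠ ∅ → f' n = f n ∧ ¬∃ m < n, f m = f n := by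
    intro n hn
    by_cases h : ∃ m < n, f m = f n
    · exact absurd (by simp [hf', h]) hn
    · exact ⟨by simp [hf', h], h⟩
  have hf'C : ∀ n, f' n ≠ ∅ → f' n ∈ T.C J := fun n hn => (hf'first n hn).1 ▸ hfC n
  have hinj : ∀ i j, f' i ≠ ∅ → f' i = f' j → i = j := by
    intro i j hi hij
    have hj : f' j ≠ ∅ := fun h => hi (hij.trans h)
    obtain ⟨hi1, hi2⟩ := hf'first i hi
    obtain ⟨hj1, hj2⟩ := hf'first j hj
    rcases lt_trichotomy i j with h | h | h
    · exact absurd ⟨i, h, by rw [← hi1, ← hj1, hij]⟩ hj2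
    · exact h
    · exact absurd ⟨j, h, by rw [← hi1, ← hj1, hij]⟩ hi2
  have hdisj : Pairwise (Function.onFun Disjoint f') := by
    intro i j hij
    rcases eq_or_ne (f' i) ∅ with h | h
    · simp [Function.onFun, h]
    rcases eq_or_ne (f' j) ∅ with h' | h'
    · simp [Function.onFun, h']
    exact T.C_disjoint J hJ (hf'C i h) (hf'C j h') fun he => hij (hinj i j h he)
  have hmeas : ∀ n, MeasurableSet (f' n) := by
    intro n
    rcases eq_or_ne (f' n) ∅ with h | h
    · rw [h]; exact MeasurableSet.empty
    · exact T.meas _ (T.C_subset_mem J hJ (hf'C n h))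
  have hUnion : (⋃ n, f' n) = J := by
    apply subset_antisymm
    · refine Set.iUnion_subset fun n => ?_
      rcases hf'cases n with h | h
      · simp [h]
      · rw [h]; exact T.subset_of_mem_C hJ (hfC n)
    · intro x hx
      rw [← T.C_union J hJ, hf] at hx
      obtain ⟨A, ⟨n0, rfl⟩, hxA⟩ := hx
      have hex : ∃ n, x ∈ f n := ⟨n0, hxA⟩
      have hxn : x ∈ f (Nat.find hex) := Nat.find_spec hex
      have hmin : ∀ m < Nat.find hex, x ∉ f m := fun m hm => Nat.find_min hex hm
      have hne : f' (Nat.find hex) ≠ ∅ := by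
        intro h
        by_cases hc : ∃ m < Nat.find hex, f m = f (Nat.find hex)
        · obtain ⟨m, hm, he⟩ := hc; exact hmin m hm (he ▸ hxn)
        · have : f' (Nat.find hex) = f (Nat.find hex) := by rw [hf']; exact if_neg hc
          rw [this] at h; rw [h] at hxn; exact hxn
      exact Set.mem_iUnion.2 ⟨Nat.find hex, ((hf'first _ hne).1).symm ▸ hxn⟩
  have htot : ∑' n, μ (f' n) = μ J := by rw [← measure_iUnion hdisj hmeas, hUnion]
  set s : ℕ → ℝ≥0∞ := fun n => ∑ i ∈ Finset.range n, μ (f' i) with hs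
  have hsup : (⨆ n, s n) = μ J := by rw [← htot, ENNReal.tsum_eq_iSup_nat]
  have hex : ∃ n, r < s n := by rw [← lt_iSup_iff, hsup]; exact hr
  have hNs : r < s (Nat.find hex) := Nat.find_spec hex
  have hN0 : Nat.find hex ≠ 0 := by
    intro h
    rw [h] at hNs
    simp [hs] at hNs
  obtain ⟨M, hM⟩ := Nat.exists_eq_succ_of_ne_zero hN0
  have hsM : s M ≤ r := not_lt.1 (Nat.find_min hex (by omega))
  have hss : s (M + 1) = s M + μ (f' M) := Finset.sum_range_succ _ M
  have hNs' : r < s M + μ (f' M) := by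
    rw [hM] at hNs
    rwa [hss] at hNs
  have hKne : f' M ≠ ∅ := by
    intro h
    rw [h, measure_empty, add_zero] at hNs'
    exact absurd hNs' (not_lt.2 hsM)
  set T0 : Set ℕ := {i | i < M ∧ f' i ≠ ∅} with hT0
  have hinj0 : Set.InjOn f' T0 := fun i hi j _ he => hinj i j hi.2 he
  have hsum : (∑' A : (f' '' T0), μ (A : Set X)) = s M := by
    rw [tsum_image _ hinj0, tsum_subtype T0 (fun i => μ (f' i))]
    rw [tsum_eq_sum (s := Finset.range M)
      (f := fun i => T0.indicator (fun i => μ (f' i)) i) ?_]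
    · refine Finset.sum_congr rfl fun i hi => ?_
      rcases eq_or_ne (f' i) ∅ with h | h
      · have : i ∉ T0 := fun hc => hc.2 h
        simp [Set.indicator_of_notMem this, h]
      · have : i ∈ T0 := ⟨Finset.mem_range.1 hi, h⟩
        simp [Set.indicator_of_mem this]
    · intro b hb
      have : b ∉ T0 := fun hc => hb (Finset.mem_range.2 hc.1)
      simp [Set.indicator_of_notMem this]
  refine ⟨f' '' T0, f' M, ?_, hf'C M hKne, ?_, ?_, ?_⟩
  · rintro A ⟨i, hi, rfl⟩
    exact hf'C i hi.2
  · rintro A ⟨i, hi, rfl⟩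
    exact hdisj (fun h : i = M => absurd (h ▸ hi.1) (lt_irrefl M))
  · rw [hsum]; exact hsM
  · rw [hsum]; exact hNs'


/-- Invariant for the greedy construction: current node is in the tree and the
remaining target is strictly smaller than its measure. -/
def Good (T : DyadicTree μ) (p : Set X × ℝ≥0∞) : Prop :=
  p.1 ∈ T.mem ∧ p.2 < μ p.1

/-- The family of children selected at a node. -/
noncomputable def sel (T : DyadicTree μ) (p : Set X × ℝ≥0∞) (h : T.Good p) : Set (Set X) :=
  (T.step h.1 h.2).choose

/-- The distinguished child into which the construction recurses. -/
noncomputable def key (T : DyadicTree μ) (p : Set X × ℝ≥0∞) (h : T.Good p) : Set X :=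
  (T.step h.1 h.2).choose_spec.choose

theorem sel_spec (T : DyadicTree μ) (p : Set X × ℝ≥0∞) (h : T.Good p) :
    T.sel p h ⊆ T.C p.1 ∧ T.key p h ∈ T.C p.1 ∧
      (∀ A ∈ T.sel p h, Disjoint A (T.key p h)) ∧
      (∑' A : T.sel p h, μ (A : Set X)) ≤ p.2 ∧
      p.2 < (∑' A : T.sel p h, μ (A : Set X)) + μ (T.key p h) :=
  (T.step h.1 h.2).choose_spec.choose_spec

theorem good_next (T : DyadicTree μ) (p : Set X × ℝ≥0∞) (h : T.Good p) :
    T.Good (T.key p h, p.2 - ∑' A : T.sel p h, μ (A : Set X)) := by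
  obtain ⟨-, h2, -, h4, h5⟩ := T.sel_spec p h
  refine ⟨T.C_subset_mem _ h.1 h2, ?_⟩
  refine (ENNReal.sub_lt_iff_lt_right (ne_top_of_lt (h4.trans_lt h.2)) h4).2 ?_
  rwa [add_comm]

/-- The sequence of states of the greedy construction. -/
noncomputable def chain (T : DyadicTree μ) (p0 : Set X × ℝ≥0∞) (h0 : T.Good p0) :
    ℕ → {p : Set X × ℝ≥0∞ // T.Good p} := fun n =>
  Nat.rec ⟨p0, h0⟩
    (fun _ σ => ⟨(T.key σ.1 σ.2, σ.1.2 - ∑' A : T.sel σ.1 σ.2, μ (A : Set X)),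
      T.good_next σ.1 σ.2⟩) n

theorem chain_zero (T : DyadicTree μ) (p0 : Set X × ℝ≥0∞) (h0 : T.Good p0) :
    (T.chain p0 h0 0).1 = p0 := rfl

theorem chain_succ (T : DyadicTree μ) (p0 : Set X × ℝ≥0∞) (h0 : T.Good p0) (k : ℕ) :
    (T.chain p0 h0 (k + 1)).1 =
      (T.key (T.chain p0 h0 k).1 (T.chain p0 h0 k).2,
        (T.chain p0 h0 k).1.2 -
          ∑' A : T.sel (T.chain p0 h0 k).1 (T.chain p0 h0 k).2, μ (A : Set X)) := rfl


theorem exists_subfamily_aux (T : DyadicTree μ) {I : Set X} (hI : I ∈ T.mem)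
    {m0 : ℕ} (hm0 : I ∈ T.gen m0) {r : ℝ≥0∞} (hr : r < μ I) :
    ∃ F : Set (Set X), F ⊆ T.mem ∧ F.Pairwise Disjoint ∧ (∀ J ∈ F, J ⊆ I) ∧
      μ (⋃₀ F) = ∑' J : F, μ (J : Set X) ∧ μ (⋃₀ F) = r := by
  classical
  set c : ℕ → {p : Set X × ℝ≥0∞ // T.Good p} := T.chain (I, r) ⟨hI, hr⟩ with hc
  set Jf : ℕ → Set X := fun k => (c k).1.1 with hJfdef
  set rf : ℕ → ℝ≥0∞ := fun k => (c k).1.2 with hrfdef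
  set Sf : ℕ → Set (Set X) := fun k => T.sel (c k).1 (c k).2 with hSfdef
  set df : ℕ → ℝ≥0∞ := fun k => ∑' A : Sf k, μ (A : Set X) with hdfdef
  have hJ0 : Jf 0 = I := rfl
  have hr0 : rf 0 = r := rfl
  have hGd : ∀ k, T.Good (c k).1 := fun k => (c k).2
  have hmem : ∀ k, Jf k ∈ T.mem := fun k => (hGd k).1
  have hrlt : ∀ k, rf k < μ (Jf k) := fun k => (hGd k).2
  have hspec : ∀ k, _ := fun k => T.sel_spec (c k).1 (c k).2
  have hSC : ∀ k, Sf k ⊆ T.C (Jf k) := fun k => (hspec k).1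
  have hKC : ∀ k, Jf (k + 1) ∈ T.C (Jf k) := fun k => (hspec k).2.1
  have hSdisjK : ∀ k, ∀ A ∈ Sf k, Disjoint A (Jf (k + 1)) := fun k => (hspec k).2.2.1
  have hdle : ∀ k, df k ≤ rf k := fun k => (hspec k).2.2.2.1
  have hreq : ∀ k, df k + rf (k + 1) = rf k := fun k => by
    have h := add_tsub_cancel_of_le (hdle k)
    exact h
  have hSmem : ∀ k, Sf k ⊆ T.mem := fun k => (hSC k).trans (T.C_subset_mem _ (hmem k))
  have hJmono : ∀ k, Jf (k + 1) ⊆ Jf k := fun k => T.subset_of_mem_C (hmem k) (hKC k)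
  have hanti : Antitone Jf := antitone_nat_of_succ_le hJmono
  have hJI : ∀ k, Jf k ⊆ I := fun k => hJ0 ▸ hanti (Nat.zero_le k)
  have hAJ : ∀ k, ∀ A ∈ Sf k, A ⊆ Jf k := fun k A hA => T.subset_of_mem_C (hmem k) (hSC k hA)
  have hgen : ∀ k, Jf k ∈ T.gen (m0 + k) := by
    intro k
    induction k with
    | zero => exact hm0
    | succ n ih =>
      show Jf (n + 1) ∈ T.gen (m0 + n + 1)
      rw [T.gen_succ]
      exact Set.mem_iUnion₂.2 ⟨Jf n, ih, hKC n⟩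
  have hrub : ∀ k, rf k ≤ ⨆ J ∈ T.gen (m0 + k), μ J := fun k =>
    (hrlt k).le.trans (le_biSup _ (hgen k))
  have htendsup : Tendsto (fun k => ⨆ J ∈ T.gen (m0 + k), μ J) atTop (nhds 0) := by
    have h := T.sup_measure_tendsto.comp (tendsto_add_atTop_nat m0)
    simpa [Function.comp_def, Nat.add_comm m0] using h
  have hrt : Tendsto rf atTop (nhds 0) :=
    tendsto_of_tendsto_of_tendsto_of_le_of_le tendsto_const_nhds htendsup
      (fun k => zero_le) hrub
  have hFmem : (⋃ k, Sf k) ⊆ T.mem := Set.iUnion_subset hSmem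
  have hcountS : ∀ k, (Sf k).Countable := fun k => (T.C_countable _ (hmem k)).mono (hSC k)
  have hcount : (⋃ k, Sf k).Countable := Set.countable_iUnion hcountS
  have hFI : ∀ J ∈ ⋃ k, Sf k, J ⊆ I := by
    intro A hA
    obtain ⟨k, hk⟩ := Set.mem_iUnion.1 hA
    exact (hAJ k A hk).trans (hJI k)
  have hcross : ∀ k l, k < l → ∀ A ∈ Sf k, ∀ B ∈ Sf l, Disjoint A B := by
    intro k l hkl A hA B hB
    exact (hSdisjK k A hA).mono_right ((hAJ l B hB).trans (hanti hkl))
  have hFpair : (⋃ k, Sf k).Pairwise Disjoint := by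
    intro A hA B hB hAB
    obtain ⟨k, hk⟩ := Set.mem_iUnion.1 hA
    obtain ⟨l, hl⟩ := Set.mem_iUnion.1 hB
    rcases lt_trichotomy k l with h | h | h
    · exact hcross k l h A hk B hl
    · subst h; exact T.C_disjoint _ (hmem k) (hSC k hk) (hSC k hl) hAB
    · exact (hcross l k h B hl A hk).symm
  have hmeasS : ∀ k, ∀ A ∈ Sf k, MeasurableSet A := fun k A hA => T.meas A (hSmem k hA)
  have hdk : ∀ k, μ (⋃₀ Sf k) = df k := fun k =>
    measure_sUnion (hcountS k) ((T.C_disjoint _ (hmem k)).mono (hSC k)) (hmeasS k)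
  have hUdisj : Pairwise (Function.onFun Disjoint fun k => ⋃₀ Sf k) := by
    have key : ∀ k l, k < l → Disjoint (⋃₀ Sf k) (⋃₀ Sf l) := by
      intro k l h
      rw [Set.disjoint_sUnion_left]
      intro A hA
      rw [Set.disjoint_sUnion_right]
      intro B hB
      exact hcross k l h A hA B hB
    intro k l h
    rcases lt_or_gt_of_ne h with h' | h'
    · exact key _ _ h'
    · exact (key _ _ h').symm
  have hUmeas : ∀ k, MeasurableSet (⋃₀ Sf k) := fun k =>
    MeasurableSet.sUnion (hcountS k) (hmeasS k)
  have hμF : μ (⋃₀ ⋃ k, Sf k) = ∑' k, df k := by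
    rw [Set.sUnion_iUnion, measure_iUnion hUdisj hUmeas]
    exact tsum_congr hdk
  have hpart : ∀ n, (∑ k ∈ Finset.range n, df k) + rf n = r := by
    intro n
    induction n with
    | zero => simpa using hr0
    | succ n ih => rw [Finset.sum_range_succ, add_assoc, hreq n, ih]
  have htsum : (∑' k, df k) = r := by
    have h1 : Tendsto (fun n => (∑ k ∈ Finset.range n, df k) + rf n) atTop
        (nhds ((∑' k, df k) + 0)) := (ENNReal.tendsto_nat_tsum df).add hrt
    have h2 : Tendsto (fun n => (∑ k ∈ Finset.range n, df k) + rf n) atTop (nhds r) := by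
      simp only [hpart]
      exact tendsto_const_nhds
    have h3 := tendsto_nhds_unique h1 h2
    simpa using h3
  refine ⟨⋃ k, Sf k, hFmem, hFpair, hFI,
    measure_sUnion hcount hFpair (fun A hA => T.meas A (hFmem hA)), ?_⟩
  rw [hμF, htsum]

end DyadicTree

end Aux

/-- Lemma 2.1: on a nonatomic probability space, for every `I ∈ 𝒯` and `a ∈ (0,1)`
there is a subfamily `ℱ(I) ⊆ 𝒯` of pairwise disjoint subsets of `I` with
`μ(⋃ ℱ(I)) = Σ_{J ∈ ℱ(I)} μ(J) = (1 − a) μ(I)`. -/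
theorem tree_exists_subfamily (μ : Measure X) [IsProbabilityMeasure μ] [NullSingletonClass μ]
    (T : DyadicTree μ) (I : Set X) (hI : I ∈ T.mem) (a : ℝ) (ha : a ∈ Set.Ioo (0 : ℝ) 1) :
    ∃ F : Set (Set X), F ⊆ T.mem ∧ F.Pairwise Disjoint ∧ (∀ J ∈ F, J ⊆ I) ∧
      μ (⋃₀ F) = ∑' J : F, μ (J : Set X) ∧
      μ (⋃₀ F) = ENNReal.ofReal (1 - a) * μ I := by
  obtain ⟨m0, hm0⟩ : ∃ m, I ∈ T.gen m := by
    have h := hI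
    rw [T.mem_eq] at h
    exact Set.mem_iUnion.1 h
  have hr : ENNReal.ofReal (1 - a) * μ I < μ I := by
    have h1 : ENNReal.ofReal (1 - a) < 1 := ENNReal.ofReal_lt_one.2 (by linarith [ha.1])
    calc ENNReal.ofReal (1 - a) * μ I < 1 * μ I :=
          (ENNReal.mul_lt_mul_iff_left (T.measure_pos I hI).ne' (measure_ne_top μ I)).2 h1
      _ = μ I := one_mul _
  exact T.exists_subfamily_aux hI hm0 hr
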